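/- Let p be prime, g a nonzero element of ℤ/p, and y ≥ 1 an integer. Write AP(v, ℓ) = {t·v : 0 ≤ t ≤ ℓ} ⊆ ℤ/p. If ℓ and m are nonnegative integers with m ≥ y and m + ℓy ≤ p - 1, then AP(yg, ℓ) + AP(g, m) = AP(g, m + ℓy), where + denotes the sumset. -/
import Mathlib


open Pointwise

def AP {p : ℕ} (v : ZMod p) (ℓ : ℕ) : Set (ZMod p) := {z | ∃ t : ℕ, t ≤ ℓ ∧ z = t • v}

theorem stmt_2 (p : ℕ) [Fact p.Prime] (g : ZMod p) (hg : g ≠ 0)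
    (y ℓ m : ℕ) (hy : 1 ≤ y) (hm : y ≤ m) (hle : m + ℓ * y ≤ p - 1) :
    AP (y • g) ℓ + AP g m = AP g (m + ℓ * y) := by
  ext z
  constructor
  · rintro ⟨a, ⟨t, ht, rfl⟩, b, ⟨s, hs, rfl⟩, rfl⟩
    refine ⟨t * y + s, ?_, ?_⟩
    · have : t * y ≤ ℓ * y := Nat.mul_le_mul_right y ht
      omega
    · simp only [smul_smul]
      push_cast
      ring
  · rintro ⟨u, hu, rfl⟩
    by_cases h : u / y ≤ ℓ
    · refine ⟨(u / y) • (y • g), ⟨u / y, h, rfl⟩, (u % y) • g,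
        ⟨u % y, ?_, rfl⟩, ?_⟩
      · have := Nat.mod_lt u (show 0 < y by omega)
        omega
      · show _ + _ = _
        rw [smul_smul, ← add_nsmul, Nat.div_add_mod' u y]
    · push_neg at h
      have hℓy : ℓ * y ≤ u := by
        have := (Nat.le_div_iff_mul_le (show 0 < y by omega)).mp h.le
        nlinarith
      refine ⟨ℓ • (y • g), ⟨ℓ, le_rfl, rfl⟩, (u - ℓ * y) • g,
        ⟨u - ℓ * y, by omega, rfl⟩, ?_⟩
      show _ + _ = _
      rw [smul_smul, ← add_nsmul]
      congr 1
      omega
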